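/- Let w = w_{m−1}...w_0 be a binary word of length m with no factor 11, and k ≥ 0 an integer. The natural density of the set of N whose Zeckendorf expansion satisfies d_{k+m−1}...d_k = w equals F_{k+2−w_0}·φ^{−k−m−w_{m−1}}, where φ = (1+√5)/2. -/

import Mathlib

open scoped Classical
noncomputable def phi : ℝ := (1 + Real.sqrt 5) / 2

/-- Lower Wythoff sequence. -/
noncomputable def A (n : ℕ) : ℕ := (⌊(n : ℝ) * phi⌋).toNat

/-- Upper Wythoff sequence. -/
noncomputable def B (n : ℕ) : ℕ := (⌊(n : ℝ) * phi ^ 2⌋).toNat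

/-- `d` is the digit sequence of the Zeckendorf expansion of `N`:
digits are 0/1, no two consecutive 1's, finitely many nonzero digits,
and `N = Σ dᵢ · F_{i+2}`. -/
def IsZeck (N : ℕ) (d : ℕ → ℕ) : Prop :=
  (∀ i, d i ≤ 1) ∧ (∀ i, ¬(d i = 1 ∧ d (i + 1) = 1)) ∧
  (Function.support d).Finite ∧ N = ∑ᶠ i, d i * Nat.fib (i + 2)

open Real goldenRatio Filter

namespace ZeckAux

def Good (d : ℕ → ℕ) : Prop := (∀ i, d i ≤ 1) ∧ ∀ i, ¬(d i = 1 ∧ d (i + 1) = 1)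

def val (d : ℕ → ℕ) (n : ℕ) : ℕ := ∑ i ∈ Finset.range n, d i * Nat.fib (i + 2)

lemma val_succ (d : ℕ → ℕ) (n : ℕ) : val d (n+1) = val d n + d n * Nat.fib (n+2) :=
  Finset.sum_range_succ _ _

lemma val_congr {d e : ℕ → ℕ} (n : ℕ) (h : ∀ i, i < n → d i = e i) : val d n = val e n :=
  Finset.sum_congr rfl fun i hi => by rw [h i (Finset.mem_range.1 hi)]

lemma good_cases {d : ℕ → ℕ} (hd : Good d) (i : ℕ) : d i = 0 ∨ d i = 1 := by
  have := hd.1 i; omega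

lemma good_no11 {d : ℕ → ℕ} (hd : Good d) {i : ℕ} (h : d (i+1) = 1) : d i = 0 := by
  have := hd.2 i
  rcases good_cases hd i with h0 | h1
  · exact h0
  · exact absurd ⟨h1, h⟩ this

lemma fib_rec (n : ℕ) : Nat.fib (n+4) = Nat.fib (n+3) + Nat.fib (n+2) := by
  rw [show n+4 = (n+2)+2 by ring, Nat.fib_add_two, show n+2+1 = n+3 by ring,
    Nat.add_comm]

lemma val_lt {d : ℕ → ℕ} (hd : Good d) : ∀ n, val d n < Nat.fib (n + 2) := by
  intro n
  induction n using Nat.strong_induction_on with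
  | _ n ih =>
    match n with
    | 0 => simp [val]
    | 1 =>
      rcases good_cases hd 0 with h | h <;>
        simp [val, h, Nat.fib_add_two]
    | (n+2) =>
      rcases good_cases hd (n+1) with h | h
      · rw [val_succ, h]
        have h1 := (ih (n+1) (by omega)).trans (Nat.fib_lt_fib_succ (n := n+3) (by omega))
        have : Nat.fib (n+1+2) = Nat.fib (n+3) := by norm_num
        rw [this]
        simpa using h1
      · have h0 : d n = 0 := good_no11 hd h
        rw [val_succ, h, val_succ, h0]
        simp only [Nat.zero_mul, Nat.add_zero, Nat.one_mul]
        have h2 := ih n (by omega)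
        have h3 := fib_rec n
        have e1 : Nat.fib (n+1+2) = Nat.fib (n+3) := by norm_num
        have e2 : Nat.fib (n+2+2) = Nat.fib (n+4) := by norm_num
        omega

lemma val_unique {d e : ℕ → ℕ} (hd : Good d) (he : Good e) :
    ∀ n, val d n = val e n → ∀ i, i < n → d i = e i := by
  intro n
  induction n with
  | zero => intro _ i hi; omega
  | succ n ih =>
    intro hval i hi
    have htop : d n = e n := by
      have h3 := val_succ d n
      have h4 := val_succ e n
      have h5 := val_lt hd n
      have h6 := val_lt he n
      rcases good_cases hd n with h1 | h1 <;> rcases good_cases he n with h2 | h2 <;>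
        rw [h1] at h3 ⊢ <;> rw [h2] at h4 ⊢ <;> simp only [Nat.zero_mul, Nat.one_mul,
          Nat.add_zero] at h3 h4 <;> omega
    refine (Nat.lt_succ_iff_lt_or_eq.1 hi).elim (fun h => ih ?_ i h) (fun h => by rw [h, htop])
    have h3 := val_succ d n
    have h4 := val_succ e n
    rw [htop] at h3
    omega

lemma exists_digits : ∀ n N, N < Nat.fib (n + 2) →
    ∃ d, Good d ∧ (∀ i, n ≤ i → d i = 0) ∧ val d n = N := by
  intro n
  induction n using Nat.strong_induction_on with
  | _ n ih =>
    match n with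
    | 0 =>
      intro N hN
      interval_cases N
      exact ⟨fun _ => 0, ⟨fun i => by simp, fun i => by simp⟩, fun i _ => rfl, by simp [val]⟩
    | 1 =>
      intro N hN
      have hN' : N ≤ 1 := by
        have : Nat.fib (1+2) = 2 := by decide
        omega
      refine ⟨fun i => if i = 0 then N else 0, ⟨fun i => ?_, fun i => ?_⟩, fun i hi => ?_, ?_⟩
      · dsimp only; split <;> omega
      · dsimp only
        rcases eq_or_ne i 0 with rfl | h
        · simp
        · simp [h]
      · dsimp only; split <;> omega
      · simp [val]
    | (p+2) =>
      intro N hN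
      have hN4 : N < Nat.fib (p+4) := by
        have : Nat.fib (p+2+2) = Nat.fib (p+4) := by norm_num
        omega
      rcases Nat.lt_or_ge N (Nat.fib (p + 3)) with h | h
      · obtain ⟨d, hd, hsupp, hval⟩ := ih (p+1) (by omega) N (by
          have : Nat.fib (p+1+2) = Nat.fib (p+3) := by norm_num
          omega)
        refine ⟨d, hd, fun i hi => hsupp i (by omega), ?_⟩
        rw [val_succ, hsupp (p+1) le_rfl]
        simpa using hval
      · have hfib := fib_rec p
        obtain ⟨d, hd, hsupp, hval⟩ := ih p (by omega) (N - Nat.fib (p+3)) (by omega)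
        set e : ℕ → ℕ := fun i => if i = p + 1 then 1 else d i with he
        have he1 : e (p+1) = 1 := by simp [he]
        have heq : ∀ i, i ≠ p + 1 → e i = d i := fun i hi => by simp [he, hi]
        refine ⟨e, ⟨fun i => ?_, fun i => ?_⟩, fun i hi => ?_, ?_⟩
        · rcases eq_or_ne i (p+1) with rfl | hne
          · rw [he1]
          · rw [heq i hne]; exact hd.1 i
        · rcases eq_or_ne i (p+1) with rfl | hne
          · rw [heq (p+2) (by omega), hsupp (p+2) (by omega)]; omega
          · rcases eq_or_ne (i+1) (p+1) with hip | hip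
            · rw [heq i hne, show i = p by omega, hsupp p le_rfl]; omega
            · rw [heq i hne, heq (i+1) hip]; exact hd.2 i
        · rw [heq i (by omega)]; exact hsupp i (by omega)
        · have hve : val e (p+1) = val d (p+1) := val_congr (p+1) (fun i hi => heq i (by omega))
          rw [val_succ, he1, one_mul, hve, val_succ, hsupp p le_rfl]
          have : Nat.fib (p+1+2) = Nat.fib (p+3) := by norm_num
          omega

lemma finsum_eq_val (h : ∀ i, n ≤ i → d i = 0) :
    ∑ᶠ i, d i * Nat.fib (i + 2) = val d n := by
  apply finsum_eq_sum_of_support_subset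
  intro x hx
  simp only [Function.support, Set.mem_setOf_eq] at hx
  simp only [Finset.coe_range, Set.mem_Iio]
  by_contra hc
  exact hx (by rw [h x (by omega)]; simp)

lemma isZeck_of (hd : Good d) (hsupp : ∀ i, n ≤ i → d i = 0) (hval : val d n = N) :
    IsZeck N d := by
  refine ⟨hd.1, hd.2, Set.Finite.subset (Set.finite_Iio n) ?_, by rw [finsum_eq_val hsupp, hval]⟩
  intro x hx
  simp only [Function.support, Set.mem_setOf_eq] at hx
  simp only [Set.mem_Iio]
  by_contra hc
  exact hx (hsupp x (by omega))

lemma isZeck_good (h : IsZeck N d) : Good d := ⟨h.1, h.2.1⟩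

lemma isZeck_exists_bound (h : IsZeck N d) : ∃ n, ∀ i, n ≤ i → d i = 0 := by
  obtain ⟨b, hb⟩ := (h.2.2.1).bddAbove
  exact ⟨b + 1, fun i hi => by
    by_contra hc
    exact absurd (hb (Function.mem_support.2 hc)) (by omega)⟩

lemma lt_fib_self (N : ℕ) : N < Nat.fib (N + 2) := by
  induction N with
  | zero => decide
  | succ n ih =>
    have h1 : 1 ≤ Nat.fib (n+1) := Nat.fib_pos.2 (by omega)
    have h2 : Nat.fib (n+3) = Nat.fib (n+1) + Nat.fib (n+2) := by
      rw [show n+3 = (n+1)+2 by ring, Nat.fib_add_two, show n+1+1 = n+2 by ring]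
    have h3 : Nat.fib (n+1+2) = Nat.fib (n+3) := by norm_num
    omega

/-- Existence -/
lemma exists_isZeck (N : ℕ) : ∃ d, IsZeck N d := by
  obtain ⟨d, hd, hsupp, hval⟩ := exists_digits N N (lt_fib_self N)
  exact ⟨d, isZeck_of hd hsupp hval⟩

/-- Uniqueness -/
lemma isZeck_unique (h1 : IsZeck N d) (h2 : IsZeck N e) : d = e := by
  obtain ⟨n1, hn1⟩ := isZeck_exists_bound h1
  obtain ⟨n2, hn2⟩ := isZeck_exists_bound h2
  set n := max n1 n2
  have hd0 : ∀ i, n ≤ i → d i = 0 := fun i hi => hn1 i (le_trans (le_max_left _ _) hi)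
  have he0 : ∀ i, n ≤ i → e i = 0 := fun i hi => hn2 i (le_trans (le_max_right _ _) hi)
  have hv : val d n = val e n := by
    have := h1.2.2.2; have := h2.2.2.2
    rw [finsum_eq_val hd0] at *; rw [finsum_eq_val he0] at *
    omega
  funext i
  rcases Nat.lt_or_ge i n with h | h
  · exact val_unique (isZeck_good h1) (isZeck_good h2) n hv i h
  · rw [hd0 i h, he0 i h]

noncomputable def zd (N : ℕ) : ℕ → ℕ := Classical.choose (exists_isZeck N)

lemma isZeck_zd (N : ℕ) : IsZeck N (zd N) := Classical.choose_spec (exists_isZeck N)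

lemma zd_eq (h : IsZeck N d) : zd N = d := isZeck_unique (isZeck_zd N) h

lemma zd_good (N : ℕ) : Good (zd N) := isZeck_good (isZeck_zd N)

/-- Digits vanish above the scale of N. -/
lemma zd_bound (h : N < Nat.fib (n + 2)) : ∀ i, n ≤ i → zd N i = 0 := by
  obtain ⟨d, hd, hsupp, hval⟩ := exists_digits n N h
  rw [zd_eq (isZeck_of hd hsupp hval)]
  exact hsupp

lemma zd_val (h : N < Nat.fib (n + 2)) : val (zd N) n = N := by
  obtain ⟨d, hd, hsupp, hval⟩ := exists_digits n N h
  rw [zd_eq (isZeck_of hd hsupp hval)]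
  exact hval

/-- Shift lemma: the digits of fib (n+2) + N' are those of N', plus a 1 at position n. -/
lemma zd_shift (hn : 1 ≤ n) (hN : N < Nat.fib (n + 1)) :
    zd (Nat.fib (n+2) + N) = fun j => if j = n then 1 else zd N j := by
  have hb : ∀ i, n - 1 ≤ i → zd N i = 0 := by
    apply zd_bound
    rw [show n - 1 + 2 = n + 1 by omega]
    exact hN
  set e : ℕ → ℕ := fun j => if j = n then 1 else zd N j with he
  have heq : ∀ i, i ≠ n → e i = zd N i := fun i hi => by simp [he, hi]
  have he1 : e n = 1 := by simp [he]
  apply isZeck_unique (isZeck_zd _) (isZeck_of (d := e) ⟨?_, ?_⟩ (n := n+1) ?_ ?_)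
  · intro i
    rcases eq_or_ne i n with hin | hi
    · rw [hin, he1]
    · rw [heq i hi]; exact (zd_good N).1 i
  · intro i
    rcases eq_or_ne i n with hin | hi
    · rw [heq (i+1) (by omega), hb (i+1) (by omega)]; omega
    · rcases eq_or_ne (i+1) n with hip | hip
      · rw [heq i hi, hb i (by omega)]; omega
      · rw [heq i hi, heq (i+1) hip]; exact (zd_good N).2 i
  · intro i hi
    rw [heq i (by omega)]
    exact hb i (by omega)
  · have h1 : val e (n+1) = val e n + Nat.fib (n+2) := by rw [val_succ, he1, one_mul]
    have h2 : val e n = val (zd N) n := val_congr n (fun i hi => heq i (by omega))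
    have h3 : val (zd N) n = N := zd_val (lt_trans hN (Nat.fib_lt_fib_succ (by omega)))
    omega


lemma zd_eq_of {N n : ℕ} {d : ℕ → ℕ} (hd : Good d) (hsupp : ∀ i, n ≤ i → d i = 0)
    (hval : val d n = N) : zd N = d := zd_eq (isZeck_of hd hsupp hval)

section Count
variable (m k : ℕ) (w : ℕ → ℕ)

def Pat (N : ℕ) : Prop := ∀ i, i < m → zd N (k + i) = w i

noncomputable def Cnt (M : ℕ) : ℕ :=
  ((Finset.range M).filter (fun N => Pat m k w N)).card

noncomputable def base : ℕ := ∑ i ∈ Finset.range m, w i * Nat.fib (k + i + 2)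

noncomputable def A0 : ℕ := Nat.fib (k + 2 - w 0)

variable {m k w}
variable (hm : 1 ≤ m) (hw01 : ∀ i, i < m → w i ≤ 1)
  (hw11 : ∀ i, i + 1 < m → ¬(w i = 1 ∧ w (i + 1) = 1))

lemma cnt_le (M : ℕ) : Cnt m k w M ≤ M := by
  simpa [Cnt] using Finset.card_filter_le (Finset.range M) _

include hm hw01 in
lemma struct_fwd {N : ℕ} (hN : N < Nat.fib (k + m + 2)) (hp : Pat m k w N) :
    N = base m k w + val (zd N) k ∧ val (zd N) k < A0 k w := by
  have hNval : val (zd N) (k + m) = N := zd_val hN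
  have hsplit : val (zd N) (k+m) = val (zd N) k + ∑ i ∈ Finset.Ico k (k+m),
      zd N i * Nat.fib (i+2) := by
    rw [val, val, Finset.range_eq_Ico, Finset.range_eq_Ico]
    exact (Finset.sum_Ico_consecutive _ (Nat.zero_le k) (Nat.le_add_right k m)).symm
  have hIco : ∑ i ∈ Finset.Ico k (k+m), zd N i * Nat.fib (i+2) = base m k w := by
    rw [Finset.sum_Ico_eq_sum_range]
    simp only [Nat.add_sub_cancel_left]
    exact Finset.sum_congr rfl fun i hi => by
      rw [hp i (Finset.mem_range.1 hi)]
  constructor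
  · omega
  · have hw0 := hw01 0 (by omega)
    rcases Nat.eq_zero_or_pos k with rfl | hk
    · have : val (zd N) 0 = 0 := by simp [val]
      rw [this]
      unfold A0
      have : 1 ≤ Nat.fib (0 + 2 - w 0) := Nat.fib_pos.2 (by omega)
      omega
    have hvk : val (zd N) k < Nat.fib (k + 2) := val_lt (zd_good N) k
    rcases Nat.eq_zero_or_pos (w 0) with hw0z | hw0o
    · unfold A0; rw [hw0z]; simpa using hvk
    · have hw0e : w 0 = 1 := by omega
      have hzk : zd N k = 1 := by
        have := hp 0 (by omega)
        rwa [Nat.add_zero, hw0e] at this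
      have hzk1 : zd N (k-1) = 0 := by
        have := good_no11 (zd_good N) (i := k - 1) (by rwa [show k-1+1 = k by omega])
        exact this
      have hkk : k = (k-1) + 1 := by omega
      have hv2 : val (zd N) k = val (zd N) (k-1) := by
        rw [hkk, val_succ, hzk1]; simp
      have hlt : val (zd N) (k-1) < Nat.fib (k-1+2) := val_lt (zd_good N) (k-1)
      unfold A0
      rw [hw0e, hv2, show k + 2 - 1 = k - 1 + 2 by omega]
      exact hlt

include hm hw01 hw11 in
lemma struct_bwd {low : ℕ} (hlow : low < A0 k w) :
    Pat m k w (base m k w + low) ∧ base m k w + low < Nat.fib (k + m + 2) ∧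
      (w (m-1) = 0 → base m k w + low < Nat.fib (k + m + 1)) := by
  have hw0 := hw01 0 (by omega)
  have hlow2 : low < Nat.fib (k + 2) := by
    apply lt_of_lt_of_le hlow
    unfold A0
    exact Nat.fib_mono (by omega)
  have hlowsupp : ∀ i, k ≤ i → zd low i = 0 := zd_bound hlow2
  have hlowsupp' : w 0 = 1 → ∀ i, k - 1 ≤ i → zd low i = 0 := by
    intro hw0e
    apply zd_bound
    rcases Nat.eq_zero_or_pos k with rfl | hk
    · simpa using hlow2
    · unfold A0 at hlow
      rw [hw0e, show k + 2 - 1 = k - 1 + 2 by omega] at hlow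
      exact hlow
  set e : ℕ → ℕ := fun i => if i < k then zd low i else if i < k + m then w (i-k) else 0 with he
  have he_low : ∀ i, i < k → e i = zd low i := fun i hi => by simp [he, hi]
  have he_mid : ∀ i, k ≤ i → i < k + m → e i = w (i - k) := fun i h1 h2 => by
    simp [he, Nat.not_lt.2 h1, h2]
  have he_hi : ∀ i, k + m ≤ i → e i = 0 := fun i hi => by
    simp only [he]
    split
    · omega
    · split <;> omega
  have hegood : Good e := by
    constructor
    · intro i
      rcases Nat.lt_or_ge i k with h | h
      · rw [he_low i h]; exact (zd_good low).1 i
      · rcases Nat.lt_or_ge i (k+m) with h2 | h2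
        · rw [he_mid i h h2]; exact hw01 _ (by omega)
        · rw [he_hi i h2]; omega
    · intro i
      rcases Nat.lt_or_ge (i+1) k with h | h
      · rw [he_low i (by omega), he_low (i+1) h]
        exact (zd_good low).2 i
      · rcases Nat.lt_or_ge (i+1) (k+m) with h2 | h2
        · rcases Nat.lt_or_ge i k with h3 | h3
          · -- boundary: i = k-1, i+1 = k
            have hik : i + 1 = k := by omega
            rw [he_low i h3, he_mid (i+1) (by omega) h2]
            rcases Nat.eq_zero_or_pos (w ((i+1) - k)) with h4 | h4
            · omega
            · have hw0e : w 0 = 1 := by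
                have : (i+1) - k = 0 := by omega
                rw [this] at h4
                omega
              rw [hlowsupp' hw0e i (by omega)]
              omega
          · rw [he_mid i h3 (by omega), he_mid (i+1) (by omega) h2]
            have := hw11 (i - k) (by omega)
            rw [show i - k + 1 = (i+1) - k by omega] at this
            intro hc
            exact this hc
        · rw [he_hi (i+1) h2]; omega
  have hesupp : ∀ i, k + m ≤ i → e i = 0 := he_hi
  have heval : val e (k + m) = base m k w + low := by
    have hsplit : val e (k+m) = ∑ i ∈ Finset.Ico 0 k, e i * Nat.fib (i+2) +
        ∑ i ∈ Finset.Ico k (k+m), e i * Nat.fib (i+2) := by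
      rw [val, Finset.range_eq_Ico]
      exact (Finset.sum_Ico_consecutive _ (Nat.zero_le k) (Nat.le_add_right k m)).symm
    have h1 : ∑ i ∈ Finset.Ico 0 k, e i * Nat.fib (i+2) = low := by
      rw [← Finset.range_eq_Ico]
      have : ∑ i ∈ Finset.range k, e i * Nat.fib (i+2) = val (zd low) k := by
        apply Finset.sum_congr rfl
        intro i hi
        rw [he_low i (Finset.mem_range.1 hi)]
      rw [this, zd_val hlow2]
    have h2 : ∑ i ∈ Finset.Ico k (k+m), e i * Nat.fib (i+2) = base m k w := by
      rw [Finset.sum_Ico_eq_sum_range]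
      simp only [Nat.add_sub_cancel_left]
      apply Finset.sum_congr rfl
      intro i hi
      have him := Finset.mem_range.1 hi
      rw [he_mid (k+i) (by omega) (by omega), Nat.add_sub_cancel_left]
    rw [hsplit, h1, h2]
    omega
  have hzde : zd (base m k w + low) = e := zd_eq_of hegood hesupp heval
  refine ⟨?_, ?_, ?_⟩
  · intro i hi
    rw [hzde, he_mid (k+i) (by omega) (by omega), Nat.add_sub_cancel_left]
  · rw [← heval]; exact val_lt hegood (k+m)
  · intro hwm
    have hetop : e (k + m - 1) = 0 := by
      rw [he_mid (k+m-1) (by omega) (by omega), show k + m - 1 - k = m - 1 by omega, hwm]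
    have : val e (k+m) = val e (k+m-1) := by
      rw [show k + m = (k+m-1)+1 by omega, val_succ, hetop]
      simp
    rw [← heval, this]
    have := val_lt hegood (k+m-1)
    rw [show k+m-1+2 = k+m+1 by omega] at this
    exact this

lemma fib3 (a : ℕ) : Nat.fib (a+3) = Nat.fib (a+2) + Nat.fib (a+1) := by
  rw [show a+3 = (a+1)+2 by ring, Nat.fib_add_two, show a+1+1 = a+2 by ring, Nat.add_comm]

include hm hw01 hw11 in
lemma filter_eq_image {M : ℕ} (hM1 : M ≤ Nat.fib (k+m+2))
    (hM2 : ∀ low, low < A0 k w → base m k w + low < M) :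
    (Finset.range M).filter (fun N => Pat m k w N)
      = (Finset.range (A0 k w)).image (fun low => base m k w + low) := by
  ext N
  simp only [Finset.mem_filter, Finset.mem_image, Finset.mem_range]
  constructor
  · rintro ⟨hN, hp⟩
    obtain ⟨h1, h2⟩ := struct_fwd hm hw01 (by omega) hp
    exact ⟨val (zd N) k, h2, h1.symm⟩
  · rintro ⟨low, hlow, rfl⟩
    exact ⟨hM2 low hlow, (struct_bwd hm hw01 hw11 hlow).1⟩

include hm hw01 hw11 in
lemma cnt_base1 : Cnt m k w (Nat.fib (k+m+2)) = A0 k w := by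
  unfold Cnt
  rw [filter_eq_image hm hw01 hw11 le_rfl
    (fun low hlow => (struct_bwd hm hw01 hw11 hlow).2.1),
    Finset.card_image_of_injective _ (add_right_injective _), Finset.card_range]

include hm hw01 hw11 in
lemma cnt_base0 : Cnt m k w (Nat.fib (k+m+1)) = (if w (m-1) = 1 then 0 else A0 k w) := by
  rcases eq_or_ne (w (m-1)) 1 with hw | hw
  · rw [if_pos hw]
    unfold Cnt
    rw [Finset.card_eq_zero, Finset.filter_eq_empty_iff]
    intro N hN
    rw [Finset.mem_range] at hN
    intro hp
    have hb : zd N (k + (m-1)) = 0 := by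
      apply zd_bound (n := k + m - 1) (by rwa [show k+m-1+2 = k+m+1 by omega]) _ (by omega)
    have := hp (m-1) (by omega)
    omega
  · have hwm : w (m-1) = 0 := by have := hw01 (m-1) (by omega); omega
    rw [if_neg hw]
    unfold Cnt
    rw [filter_eq_image hm hw01 hw11 (Nat.fib_mono (by omega))
      (fun low hlow => (struct_bwd hm hw01 hw11 hlow).2.2 hwm),
      Finset.card_image_of_injective _ (add_right_injective _), Finset.card_range]

include hm in
lemma cnt_split {n M : ℕ} (hn : k + m ≤ n) (h1 : Nat.fib (n+2) ≤ M) (h2 : M ≤ Nat.fib (n+3)) :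
    Cnt m k w M = Cnt m k w (Nat.fib (n+2)) + Cnt m k w (M - Nat.fib (n+2)) := by
  set F := Nat.fib (n+2) with hF
  have hMF : M - F ≤ Nat.fib (n+1) := by
    have := fib3 n
    omega
  have key : ∀ N', N' < Nat.fib (n+1) → (Pat m k w (F + N') ↔ Pat m k w N') := by
    intro N' hN'
    have hz := zd_shift (n := n) (by omega) hN'
    unfold Pat
    constructor <;> intro h i hi <;> have hh := h i hi
    · rw [hz] at hh
      simp only at hh
      rwa [if_neg (by omega)] at hh
    · rw [hz]
      simp only
      rwa [if_neg (by omega)]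
  have hsplit : Finset.range M = Finset.range F ∪ Finset.Ico F M := by
    rw [Finset.range_eq_Ico, Finset.range_eq_Ico]
    exact (Finset.Ico_union_Ico_eq_Ico (Nat.zero_le _) h1).symm
  have hdisj : Disjoint ((Finset.range F).filter (fun N => Pat m k w N))
      ((Finset.Ico F M).filter (fun N => Pat m k w N)) := by
    apply Finset.disjoint_filter_filter
    rw [Finset.range_eq_Ico]
    exact Finset.Ico_disjoint_Ico_consecutive _ _ _
  have himg : (Finset.Ico F M).filter (fun N => Pat m k w N)
      = ((Finset.range (M - F)).filter (fun N => Pat m k w N)).image (fun N' => F + N') := by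
    ext N
    simp only [Finset.mem_filter, Finset.mem_image, Finset.mem_Ico, Finset.mem_range]
    constructor
    · rintro ⟨⟨hNF, hNM⟩, hp⟩
      refine ⟨N - F, ⟨by omega, ?_⟩, by omega⟩
      rw [← key (N - F) (by omega)]
      rwa [show F + (N - F) = N by omega]
    · rintro ⟨N', ⟨hN', hp⟩, rfl⟩
      exact ⟨⟨by omega, by omega⟩, (key N' (by omega)).2 hp⟩
  unfold Cnt
  rw [hsplit, Finset.filter_union, Finset.card_union_of_disjoint hdisj, himg,
    Finset.card_image_of_injective _ (add_right_injective _)]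

include hm hw01 hw11 in
lemma cnt_fib : ∀ j, Cnt m k w (Nat.fib (k+m+1+j)) = Nat.fib (j+1 - w (m-1)) * A0 k w := by
  have hwm : w (m-1) ≤ 1 := hw01 (m-1) (by omega)
  intro j
  induction j using Nat.strong_induction_on with
  | _ j ih =>
    match j with
    | 0 =>
      have := cnt_base0 (k := k) hm hw01 hw11
      rw [show k+m+1+0 = k+m+1 by ring, this]
      rcases Nat.eq_zero_or_pos (w (m-1)) with h | h
      · rw [h]; simp
      · rw [if_pos (by omega), show 0+1 - w (m-1) = 0 by omega]
        simp
    | 1 =>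
      have := cnt_base1 (k := k) hm hw01 hw11
      rw [show k+m+1+1 = k+m+2 by ring, this]
      rcases Nat.eq_zero_or_pos (w (m-1)) with h | h
      · rw [h]; simp
      · rw [show 1+1 - w (m-1) = 1 by omega]
        simp
    | (j+2) =>
      have e1 : Nat.fib (k+m+1+(j+2)) = Nat.fib ((k+m+j)+3) := by
        rw [show k+m+1+(j+2) = (k+m+j)+3 by ring]
      have e2 := fib3 (k+m+j)
      have hsp := cnt_split (m := m) (k := k) (w := w) hm (n := k+m+j)
        (M := Nat.fib (k+m+1+(j+2)))
        (by omega) (by rw [e1]; omega) (by rw [e1])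
      have d1 : Nat.fib (k+m+1+(j+2)) - Nat.fib (k+m+j+2) = Nat.fib (k+m+1+j) := by
        rw [e1, show k+m+1+j = (k+m+j)+1 by ring]
        omega
      have r1 : Nat.fib (k+m+j+2) = Nat.fib (k+m+1+(j+1)) := by
        rw [show k+m+1+(j+1) = k+m+j+2 by ring]
      rw [hsp, d1, r1, ih (j+1) (by omega), ih j (by omega), ← Nat.add_mul]
      congr 1
      rcases Nat.eq_zero_or_pos (w (m-1)) with h | h
      · rw [h]
        simp only [Nat.sub_zero]
        rw [show j+1+1 = j+2 by ring, show j+2+1 = j+3 by ring, fib3 j]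
      · have h1 : w (m-1) = 1 := by omega
        rw [h1, show j+1+1-1 = j+1 by omega, show j+1-1 = j by omega,
          show j+2+1-1 = j+2 by omega, Nat.fib_add_two]
        omega

/-- |fib t - fib (s+t)/φ^s| ≤ 1 -/
lemma binet_err (s t : ℕ) :
    |(Nat.fib t : ℝ) - (Nat.fib (s+t) : ℝ) / goldenRatio ^ s| ≤ 1 := by
  have h5 : (0:ℝ) < Real.sqrt 5 := by positivity
  have h2 : (2:ℝ) ≤ Real.sqrt 5 := by
    nlinarith [Real.sq_sqrt (by norm_num : (0:ℝ) ≤ 5), Real.sqrt_nonneg 5]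
  have hψ : |goldenConj| ≤ 1 := by
    rw [abs_le]
    constructor
    · exact neg_one_lt_goldenConj.le
    · exact le_of_lt (lt_trans goldenConj_neg one_pos)
  have hψp : ∀ a : ℕ, |goldenConj ^ a| ≤ 1 := fun a => by
    rw [abs_pow]; exact pow_le_one₀ (abs_nonneg _) hψ
  have hφp : (1:ℝ) ≤ goldenRatio ^ s := one_le_pow₀ one_lt_goldenRatio.le
  have hφpos : (0:ℝ) < goldenRatio ^ s := lt_of_lt_of_le one_pos hφp
  rw [Real.coe_fib_eq, Real.coe_fib_eq]
  have key : (goldenRatio ^ t - goldenConj ^ t) / √5 -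
      (goldenRatio ^ (s+t) - goldenConj ^ (s+t)) / √5 / goldenRatio ^ s
      = (goldenConj ^ (s+t) / goldenRatio ^ s - goldenConj ^ t) / √5 := by
    rw [pow_add goldenRatio s t]
    field_simp
    ring
  rw [key, abs_div, abs_of_nonneg h5.le]
  have hnum : |goldenConj ^ (s+t) / goldenRatio ^ s - goldenConj ^ t| ≤ 2 := by
    refine (abs_sub _ _).trans ?_
    have h1 : |goldenConj ^ (s+t) / goldenRatio ^ s| ≤ 1 := by
      rw [abs_div, abs_of_nonneg hφpos.le]
      calc |goldenConj ^ (s+t)| / goldenRatio ^ s ≤ |goldenConj ^ (s+t)| / 1 := by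
            apply div_le_div_of_nonneg_left (abs_nonneg _) one_pos hφp
        _ ≤ 1 := by rw [div_one]; exact hψp _
    linarith [hψp t]
  calc |goldenConj ^ (s+t) / goldenRatio ^ s - goldenConj ^ t| / √5 ≤ 2 / √5 := by
        gcongr
    _ ≤ 1 := by
        rw [div_le_one h5]; exact h2

/-- fib lower bound: φ^(n+1) ≤ 5 fib (n+1) -/
lemma fib_lb : ∀ n : ℕ, goldenRatio ^ (n+1) ≤ 5 * (Nat.fib (n+1) : ℝ) := by
  have hg2 : goldenRatio < 2 := goldenRatio_lt_two
  have hg0 : 0 < goldenRatio := goldenRatio_pos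
  have key : ∀ n : ℕ, goldenRatio ^ (n+1) ≤ 5 * (Nat.fib (n+1) : ℝ) ∧
      goldenRatio ^ (n+2) ≤ 5 * (Nat.fib (n+2) : ℝ) := by
    intro n
    induction n with
    | zero =>
      constructor
      · simp [Nat.fib_one]
        nlinarith
      · rw [goldenRatio_sq]
        simp [Nat.fib_two]  -- fib 2 = 1
        nlinarith
    | succ p ih =>
      refine ⟨ih.2, ?_⟩
      have hrec : goldenRatio ^ (p+3) = goldenRatio ^ (p+2) + goldenRatio ^ (p+1) := by
        have : goldenRatio ^ (p+3) = goldenRatio ^ (p+1) * goldenRatio ^ 2 := by ring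
        rw [this, goldenRatio_sq]
        ring
      have hfib : (Nat.fib (p+3) : ℝ) = Nat.fib (p+2) + Nat.fib (p+1) := by
        have : Nat.fib (p+3) = Nat.fib (p+2) + Nat.fib (p+1) := by
          rw [show p+3 = (p+1)+2 by ring, Nat.fib_add_two, show p+1+1 = p+2 by ring,
            Nat.add_comm]
        rw [this]; push_cast; ring
      rw [show p+1+2 = p+3 by ring, hrec, hfib]
      have := ih.1
      have := ih.2
      linarith
  exact fun n => (key n).1

variable (m k w) in
noncomputable def rho : ℝ := (A0 k w : ℝ) / goldenRatio ^ (k + m + w (m-1))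

variable (m k w) in
noncomputable def Kc : ℝ := (A0 k w : ℝ) + (1 + rho m k w) * (Nat.fib (k+m+2) : ℝ)

lemma rho_nonneg : 0 ≤ rho m k w := by
  unfold rho
  positivity

lemma fibq_ge_one : (1:ℝ) ≤ (Nat.fib (k+m+2) : ℝ) := by
  exact_mod_cast Nat.fib_pos.2 (by omega)

lemma Kc_ge_A0 : (A0 k w : ℝ) ≤ Kc m k w := by
  have h1 := rho_nonneg (m := m) (k := k) (w := w)
  have h2 := fibq_ge_one (m := m) (k := k)
  unfold Kc
  nlinarith

lemma Kc_ge_one : (1:ℝ) ≤ Kc m k w := by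
  have h1 := rho_nonneg (m := m) (k := k) (w := w)
  have h2 := fibq_ge_one (m := m) (k := k)
  unfold Kc
  have h3 : (0:ℝ) ≤ (A0 k w : ℝ) := Nat.cast_nonneg _
  nlinarith

include hm hw01 hw11 in
lemma cnt_err : ∀ j, |(Cnt m k w (Nat.fib (k+m+1+j)) : ℝ) -
    rho m k w * (Nat.fib (k+m+1+j) : ℝ)| ≤ (A0 k w : ℝ) := by
  intro j
  have hwm : w (m-1) ≤ 1 := hw01 (m-1) (by omega)
  set wm := w (m-1) with hwmdef
  set t := j + 1 - wm with ht
  have hst : (k+m+wm) + t = k+m+1+j := by omega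
  rw [cnt_fib hm hw01 hw11 j, ← hst]
  set s := k+m+wm with hs
  have hb := binet_err s t
  have hA0 : (0:ℝ) ≤ (A0 k w : ℝ) := Nat.cast_nonneg _
  have hφpos : (0:ℝ) < goldenRatio ^ s := pow_pos goldenRatio_pos s
  have key : ((Nat.fib t * A0 k w : ℕ) : ℝ) - rho m k w * (Nat.fib (s+t) : ℝ)
      = (A0 k w : ℝ) * ((Nat.fib t : ℝ) - (Nat.fib (s+t) : ℝ) / goldenRatio ^ s) := by
    unfold rho
    rw [← hs]
    push_cast
    field_simp
  rw [key, abs_mul, abs_of_nonneg hA0]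
  calc (A0 k w : ℝ) * |(Nat.fib t : ℝ) - (Nat.fib (s+t) : ℝ) / goldenRatio ^ s|
      ≤ (A0 k w : ℝ) * 1 := mul_le_mul_of_nonneg_left hb hA0
    _ = _ := mul_one _

include hm hw01 hw11 in
lemma global : ∀ n M, M ≤ Nat.fib (n+2) →
    |(Cnt m k w M : ℝ) - rho m k w * M| ≤ Kc m k w * (n+1) := by
  have hK0 : (0:ℝ) ≤ Kc m k w := le_trans zero_le_one (Kc_ge_one (m := m))
  have hr := rho_nonneg (m := m) (k := k) (w := w)
  intro n
  induction n using Nat.strong_induction_on with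
  | _ n ih =>
    intro M hM
    by_cases hsmall : M ≤ Nat.fib (k+m+2)
    · have h1 : (Cnt m k w M : ℝ) ≤ M := by exact_mod_cast cnt_le M
      have h0 : (0:ℝ) ≤ (Cnt m k w M : ℝ) := Nat.cast_nonneg _
      have hM0 : (0:ℝ) ≤ (M:ℝ) := Nat.cast_nonneg _
      have hMf : (M:ℝ) ≤ (Nat.fib (k+m+2) : ℝ) := by exact_mod_cast hsmall
      have hrM : rho m k w * M ≤ rho m k w * Nat.fib (k+m+2) :=
        mul_le_mul_of_nonneg_left hMf hr
      have habs : |(Cnt m k w M : ℝ) - rho m k w * M|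
          ≤ (1 + rho m k w) * (Nat.fib (k+m+2) : ℝ) := by
        rw [abs_le]
        constructor <;> nlinarith
      refine habs.trans ?_
      have h2 : (1 + rho m k w) * (Nat.fib (k+m+2) : ℝ) ≤ Kc m k w := by
        unfold Kc
        have : (0:ℝ) ≤ (A0 k w : ℝ) := Nat.cast_nonneg _
        linarith
      refine h2.trans ?_
      have : (1:ℝ) ≤ (n:ℝ) + 1 := by
        have : (0:ℝ) ≤ (n:ℝ) := Nat.cast_nonneg _
        linarith
      nlinarith
    · push_neg at hsmall
      have hq : k + m < n := by
        by_contra hc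
        push_neg at hc
        have := Nat.fib_mono (show n+2 ≤ k+m+2 by omega)
        omega
      by_cases hM1 : M ≤ Nat.fib (n+1)
      · have hih := ih (n-1) (by omega) M (by rw [show n-1+2 = n+1 by omega]; exact hM1)
        refine hih.trans ?_
        have hc : ((n-1:ℕ):ℝ) + 1 ≤ (n:ℝ) + 1 := by
          have h2 : ((n-1:ℕ):ℝ) ≤ (n:ℝ) := by exact_mod_cast (by omega : n - 1 ≤ n)
          linarith
        nlinarith
      · push_neg at hM1
        have hsp := cnt_split (m := m) (k := k) (w := w) hm (n := n-1) (M := M) (by omega)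
          (by rw [show n-1+2 = n+1 by omega]; omega)
          (by rw [show n-1+3 = n+2 by omega]; exact hM)
        rw [show n-1+2 = n+1 by omega] at hsp
        set M' := M - Nat.fib (n+1) with hM'def
        have hfibr : Nat.fib (n+2) = Nat.fib (n+1) + Nat.fib n := by
          have := fib3 (n-1)
          rw [show n-1+3 = n+2 by omega, show n-1+2 = n+1 by omega,
            show n-1+1 = n by omega] at this
          exact this
        have hM'le : M' ≤ Nat.fib (n+1) := by
          have := Nat.fib_mono (show n ≤ n+1 by omega)
          omega
        have hih := ih (n-1) (by omega) M' (by rw [show n-1+2 = n+1 by omega]; exact hM'le)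
        have herr : |(Cnt m k w (Nat.fib (n+1)) : ℝ) - rho m k w * (Nat.fib (n+1) : ℝ)|
            ≤ (A0 k w : ℝ) := by
          have hj := cnt_err (k := k) hm hw01 hw11 (n - (k+m))
          rw [show k+m+1+(n-(k+m)) = n+1 by omega] at hj
          exact hj
        have hcast1 : (Cnt m k w M : ℝ) = (Cnt m k w (Nat.fib (n+1)) : ℝ) + (Cnt m k w M' : ℝ) := by
          exact_mod_cast hsp
        have hcast2 : (M:ℝ) = (Nat.fib (n+1) : ℝ) + (M' : ℝ) := by
          have : Nat.fib (n+1) + M' = M := by omega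
          exact_mod_cast this.symm
        have key : (Cnt m k w M : ℝ) - rho m k w * M
            = ((Cnt m k w (Nat.fib (n+1)) : ℝ) - rho m k w * (Nat.fib (n+1) : ℝ))
              + ((Cnt m k w M' : ℝ) - rho m k w * M') := by
          rw [hcast1, hcast2]; ring
        rw [key]
        refine (abs_add_le _ _).trans ?_
        have hA0K := Kc_ge_A0 (m := m) (k := k) (w := w)
        have hn1 : ((n-1:ℕ):ℝ) + 1 = (n:ℝ) := by exact_mod_cast (by omega : n-1+1 = n)
        have hring : Kc m k w * ((n:ℝ)+1) = Kc m k w * (n:ℝ) + Kc m k w := by ring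
        rw [hn1] at hih
        linarith

include hm hw01 hw11 in
lemma cnt_tendsto :
    Tendsto (fun M : ℕ => (Cnt m k w M : ℝ) / M) atTop (nhds (rho m k w)) := by
  have hK1 := Kc_ge_one (m := m) (k := k) (w := w)
  have hK0 : (0:ℝ) ≤ Kc m k w := le_trans zero_le_one hK1
  have hbd : ∀ M : ℕ, 1 ≤ M → |(Cnt m k w M : ℝ)/M - rho m k w|
      ≤ 5 * Kc m k w * ((Nat.greatestFib M : ℝ) * (goldenRatio⁻¹)^(Nat.greatestFib M)) := by
    intro M hM1
    set g := Nat.greatestFib M with hg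
    have hg1 : 1 ≤ g := Nat.le_greatestFib.2 (by simpa [Nat.fib_one] using hM1)
    have hMlt : M < Nat.fib (g+1) := Nat.lt_fib_greatestFib_add_one M
    have hgl := global (k := k) hm hw01 hw11 (g-1) M (by rw [show g-1+2 = g+1 by omega]; omega)
    have hgcast : ((g-1:ℕ):ℝ)+1 = (g:ℝ) := by exact_mod_cast (by omega : g-1+1 = g)
    rw [hgcast] at hgl
    have hMfib : Nat.fib g ≤ M := Nat.fib_greatestFib_le M
    have hflb : goldenRatio ^ g ≤ 5 * (Nat.fib g : ℝ) := by
      have := fib_lb (g-1)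
      rw [show g-1+1 = g by omega] at this
      exact this
    have hMreal : (0:ℝ) < (M:ℝ) := by exact_mod_cast hM1
    have heq : (Cnt m k w M : ℝ)/M - rho m k w = ((Cnt m k w M : ℝ) - rho m k w * M)/M := by
      field_simp
    rw [heq, abs_div, abs_of_pos hMreal]
    have hφg : (0:ℝ) < goldenRatio ^ g := pow_pos goldenRatio_pos g
    have hMge : goldenRatio ^ g / 5 ≤ (M:ℝ) := by
      have hc : (Nat.fib g : ℝ) ≤ (M:ℝ) := by exact_mod_cast hMfib
      linarith
    have hKg0 : (0:ℝ) ≤ Kc m k w * g := by positivity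
    calc |(Cnt m k w M : ℝ) - rho m k w * M| / M ≤ Kc m k w * g / M := by gcongr
      _ ≤ Kc m k w * g / (goldenRatio ^ g / 5) := by
          gcongr
      _ = 5 * Kc m k w * ((g:ℝ) * (goldenRatio⁻¹)^g) := by
          rw [inv_pow]
          field_simp
  have hlim0 : Tendsto (fun n : ℕ => (n:ℝ) * (goldenRatio⁻¹)^n) atTop (nhds 0) :=
    tendsto_self_mul_const_pow_of_lt_one (inv_nonneg.2 goldenRatio_pos.le)
      (inv_lt_one_of_one_lt₀ one_lt_goldenRatio)
  have hgf : Tendsto (fun M : ℕ => Nat.greatestFib M) atTop atTop :=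
    tendsto_atTop_atTop_of_monotone Nat.greatestFib_mono
      (fun b => ⟨Nat.fib b, Nat.le_greatestFib.2 le_rfl⟩)
  have hlim : Tendsto (fun M : ℕ =>
      5 * Kc m k w * ((Nat.greatestFib M : ℝ) * (goldenRatio⁻¹)^(Nat.greatestFib M)))
      atTop (nhds 0) := by
    have h2 := (hlim0.comp hgf).const_mul (5 * Kc m k w)
    simpa using h2
  rw [tendsto_iff_dist_tendsto_zero]
  simp only [Real.dist_eq]
  apply squeeze_zero' (Filter.Eventually.of_forall (fun M => abs_nonneg _)) ?_ hlim
  filter_upwards [Filter.eventually_ge_atTop 1] with M hM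
  exact hbd M hM

end Count
end ZeckAux

lemma phi_eq_gold : phi = goldenRatio := rfl

/-- The natural density of the set of N whose Zeckendorf digits satisfy
d_{k+m−1}…d_k = w equals F_{k+2−w₀}·phi^{−k−m−w_{m−1}}. -/
theorem zeck_word_at_position_density (m : ℕ) (hm : 1 ≤ m) (k : ℕ) (w : ℕ → ℕ)
    (hw01 : ∀ i, i < m → w i ≤ 1)
    (hw11 : ∀ i, i + 1 < m → ¬(w i = 1 ∧ w (i + 1) = 1)) :
    Filter.Tendsto
      (fun M : ℕ =>
        (((Finset.range M).filter
            (fun N => ∃ d : ℕ → ℕ, IsZeck N d ∧ ∀ i, i < m → d (k + i) = w i)).card : ℝ)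
          / (M : ℝ))
      Filter.atTop
      (nhds ((Nat.fib (k + 2 - w 0) : ℝ) * phi ^ (-((k : ℤ) + m + w (m - 1))))) := by
  have hpred : ∀ N, (∃ d : ℕ → ℕ, IsZeck N d ∧ ∀ i, i < m → d (k + i) = w i)
      ↔ ZeckAux.Pat m k w N := by
    intro N
    constructor
    · rintro ⟨d, hd, hp⟩
      intro i hi
      rw [ZeckAux.zd_eq hd]
      exact hp i hi
    · intro hp
      exact ⟨ZeckAux.zd N, ZeckAux.isZeck_zd N, hp⟩
  have hfun : ∀ M : ℕ, ((Finset.range M).filter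
      (fun N => ∃ d : ℕ → ℕ, IsZeck N d ∧ ∀ i, i < m → d (k + i) = w i)).card
      = ZeckAux.Cnt m k w M := by
    intro M
    unfold ZeckAux.Cnt
    congr 1
    apply Finset.filter_congr
    intro N _
    simp only [hpred N]
  have hconst : (Nat.fib (k + 2 - w 0) : ℝ) * phi ^ (-((k : ℤ) + m + w (m - 1)))
      = ZeckAux.rho m k w := by
    unfold ZeckAux.rho ZeckAux.A0
    have h1 : (-((k:ℤ) + m + w (m-1))) = -(((k + m + w (m-1) : ℕ) : ℤ)) := by
      push_cast
      ring
    rw [h1, zpow_neg, zpow_natCast, phi_eq_gold, div_eq_mul_inv]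
  have hmain := ZeckAux.cnt_tendsto (m := m) (k := k) (w := w) hm hw01 hw11
  rw [hconst]
  have hfeq : (fun M : ℕ =>
      (((Finset.range M).filter
          (fun N => ∃ d : ℕ → ℕ, IsZeck N d ∧ ∀ i, i < m → d (k + i) = w i)).card : ℝ)
        / (M : ℝ)) = fun M : ℕ => (ZeckAux.Cnt m k w M : ℝ) / M := by
    funext M
    rw [hfun M]
  rw [hfeq]
  exact hmain
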